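/- Let D be a DAG with no v-structures whose skeleton G is connected and chordal, and let v be a vertex of D. If b is a vertex not adjacent to v such that some path from v to b in G avoids the parents of v, and a is a parent of v adjacent to b, then the edge between a and b is directed a → b in D. -/

import Mathlib

/-- A directed graph (relation) is acyclic if it has no directed cycles. -/
def Acyclic {V : Type*} (D : V → V → Prop) : Prop :=
  ∀ x : V, ¬ Relation.TransGen D x x

/-- The skeleton of a directed graph: forget edge directions. -/
def skeleton {V : Type*} (D : V → V → Prop) : SimpleGraph V where
  Adj x y := x ≠ y ∧ (D x y ∨ D y x)
  symm := ⟨fun x y ⟨hxy, h⟩ => ⟨hxy.symm, h.symm⟩⟩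
  loopless := ⟨fun x ⟨h, _⟩ => h rfl⟩

/-- `D` has no v-structures: any two distinct parents of a common child are adjacent
in the skeleton. -/
def NoVStructures {V : Type*} (D : V → V → Prop) : Prop :=
  ∀ x y z : V, D x y → D z y → x ≠ z → (skeleton D).Adj x z

/-- A graph is chordal if every cycle of length at least four has a chord. -/
def IsChordal {V : Type*} (G : SimpleGraph V) : Prop :=
  ∀ ⦃v : V⦄ (c : G.Walk v v), c.IsCycle → 4 ≤ c.length →
    ∃ u w : V, u ∈ c.support ∧ w ∈ c.support ∧ G.Adj u w ∧ s(u, w) ∉ c.edges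

/-- Along a minimal-length walk avoiding the parents of `v`, edge directions propagate
forward, yielding a directed path. -/
private lemma directed_along_min_walk {V : Type*} (D : V → V → Prop)
    (hnov : NoVStructures D) (v b : V) :
    ∀ n (u p : V) (w : (skeleton D).Walk u b), w.length = n →
      (skeleton D).Adj p u → D p u → ¬ D p v →
      (∀ x ∈ w.support, ¬ D x v) →
      (∀ w' : (skeleton D).Walk p b, (∀ x ∈ w'.support, ¬ D x v) → n + 1 ≤ w'.length) →
      Relation.TransGen D p b := by
  intro n
  induction n with
  | zero =>
    intro u p w hlen hadjpu hpu hp havoid hmin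
    cases w with
    | nil => exact Relation.TransGen.single hpu
    | cons h rest => simp [SimpleGraph.Walk.length_cons] at hlen
  | succ n ih =>
    intro u p w hlen hadjpu hpu hp havoid hmin
    cases w with
    | nil => simp at hlen
    | @cons _ u'' _ h2 rest =>
      have hlen' : rest.length = n := by
        simpa [SimpleGraph.Walk.length_cons] using hlen
      have havoid' : ∀ x ∈ rest.support, ¬ D x v := fun x hx =>
        havoid x (by simp [SimpleGraph.Walk.support_cons, hx])
      -- first, the edge u -- u'' is directed u → u''
      have hDuu'' : D u u'' := by
        rcases h2.2 with h | h
        · exact h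
        · -- D u'' u : derive a contradiction with minimality
          exfalso
          by_cases hpu'' : p = u''
          · subst hpu''
            have := hmin rest havoid'
            omega
          · have hadj : (skeleton D).Adj p u'' := hnov p u u'' hpu h hpu''
            have havoid'' : ∀ x ∈ (SimpleGraph.Walk.cons hadj rest).support, ¬ D x v := by
              intro x hx
              rw [SimpleGraph.Walk.support_cons] at hx
              rcases List.mem_cons.mp hx with rfl | hx
              · exact hp
              · exact havoid' x hx
            have := hmin (SimpleGraph.Walk.cons hadj rest) havoid''
            simp [SimpleGraph.Walk.length_cons, hlen'] at this
      have hu : ¬ D u v := havoid u (by simp [SimpleGraph.Walk.support_cons])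
      have hmin' : ∀ w' : (skeleton D).Walk u b, (∀ x ∈ w'.support, ¬ D x v) →
          n + 1 ≤ w'.length := by
        intro w' hw'
        have havoid'' : ∀ x ∈ (SimpleGraph.Walk.cons hadjpu w').support, ¬ D x v := by
          intro x hx
          rw [SimpleGraph.Walk.support_cons] at hx
          rcases List.mem_cons.mp hx with rfl | hx
          · exact hp
          · exact hw' x hx
        have := hmin (SimpleGraph.Walk.cons hadjpu w') havoid''
        simp [SimpleGraph.Walk.length_cons] at this
        omega
      exact Relation.TransGen.head hpu (ih u'' u rest hlen' h2 hDuu'' hu havoid' hmin')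

/-- If `b` is not adjacent to `v`, some path from `v` to `b` in the skeleton avoids the
parents of `v`, and `a` is a parent of `v` adjacent to `b`, then `a → b` in `D`. -/
theorem parent_to_nonneighbor_directed {V : Type*} (D : V → V → Prop)
    (hacyc : Acyclic D) (hnov : NoVStructures D)
    (hconn : (skeleton D).Connected) (hchordal : IsChordal (skeleton D))
    (v b a : V)
    (hb : ¬ (skeleton D).Adj v b)
    (hpath : ∃ w : (skeleton D).Walk v b, ∀ x ∈ w.support, ¬ D x v)
    (ha : D a v) (hab : (skeleton D).Adj a b) :
    D a b := by
  classical
  by_cases hvb : v = b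
  · subst hvb; exact ha
  obtain ⟨w, hw⟩ := hpath
  set S : Set ℕ := {m | ∃ w' : (skeleton D).Walk v b, (∀ x ∈ w'.support, ¬ D x v) ∧
    w'.length = m} with hS
  have hSne : S.Nonempty := ⟨w.length, w, hw, rfl⟩
  obtain ⟨w0, hw0, hlen0⟩ := Nat.sInf_mem hSne
  have hmin : ∀ w' : (skeleton D).Walk v b, (∀ x ∈ w'.support, ¬ D x v) →
      sInf S ≤ w'.length := fun w' h => Nat.sInf_le ⟨w', h, rfl⟩
  have htrans : Relation.TransGen D v b := by
    cases w0 with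
    | nil => exact absurd rfl hvb
    | @cons _ x1 _ h rest =>
      have hx1 : ¬ D x1 v :=
        hw0 x1 (by simp [SimpleGraph.Walk.support_cons])
      have hvx1 : D v x1 := by
        rcases h.2 with h' | h'
        · exact h'
        · exact absurd h' hx1
      have hv : ¬ D v v := hw0 v (by simp [SimpleGraph.Walk.support_cons])
      have havoid' : ∀ x ∈ rest.support, ¬ D x v := fun x hx =>
        hw0 x (by simp [SimpleGraph.Walk.support_cons, hx])
      have hmin' : ∀ w' : (skeleton D).Walk v b, (∀ x ∈ w'.support, ¬ D x v) →
          rest.length + 1 ≤ w'.length := by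
        intro w' hw'
        have h1 := hmin w' hw'
        have h2 : sInf S = rest.length + 1 := by
          rw [← hlen0]; simp [SimpleGraph.Walk.length_cons]
        omega
      exact directed_along_min_walk D hnov v b rest.length x1 v rest rfl h hvx1 hv
        havoid' hmin'
  rcases hab.2 with h | h
  · exact h
  · exact absurd ((htrans.tail h).tail ha) (hacyc v)
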